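/- Let (ρ, ψ, ψ₁, α) be a projective 2-representation of a group G on V. For all g, h ∈ G, the k-linear map β_{g,h} : X(g) → X(hgh⁻¹) is bijective, i.e., an isomorphism of k-vector spaces. -/

import Mathlib

open CategoryTheory

/-- A projective 2-representation of a group `G` on a `k`-linear category `V`,
with cocycle data `α : G → G → G → kˣ`. -/
structure ProjTwoRep (k : Type*) [Field k] (G : Type*) [Group G]
    (V : Type*) [Category V] [Preadditive V] [CategoryTheory.Linear k V] where
  /-- the underlying functors -/
  ρ : G → V ⥤ V
  /-- each `ρ g` is an equivalence of categories -/
  equiv : ∀ g : G, (ρ g).IsEquivalence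
  /-- the coherence isomorphisms `ψ_{g,h} : ρ h ⋙ ρ g ≅ ρ (g * h)` -/
  ψ : ∀ g h : G, ρ h ⋙ ρ g ≅ ρ (g * h)
  /-- the unit isomorphism `ψ₁ : ρ 1 ≅ 𝟭 V` -/
  ψ₁ : ρ 1 ≅ 𝟭 V
  /-- the cocycle data -/
  α : G → G → G → kˣ
  /-- condition (i): `ψ_{g,hk} ∘ ρ(g)(ψ_{h,k}) = α(g,h,k) • (ψ_{gh,k} ∘ ψ_{g,h} ρ(k))` -/
  cond_i : ∀ (g h j : G) (X : V),
    (ρ g).map ((ψ h j).hom.app X) ≫ (ψ g (h * j)).hom.app X ≫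
        eqToHom (by rw [mul_assoc]) =
      ((α g h j : kˣ) : k) •
        ((ψ g h).hom.app ((ρ j).obj X) ≫ (ψ (g * h) j).hom.app X)
  /-- condition (ii), left part: `(ψ_{1,g})_X = (ψ₁)_{ρ(g)(X)}` -/
  cond_ii_left : ∀ (g : G) (X : V),
    (ψ 1 g).hom.app X = ψ₁.hom.app ((ρ g).obj X) ≫ eqToHom (by rw [one_mul]; rfl)
  /-- condition (ii), right part: `(ψ_{g,1})_X = ρ(g)((ψ₁)_X)` -/
  cond_ii_right : ∀ (g : G) (X : V),
    (ψ g 1).hom.app X = (ρ g).map (ψ₁.hom.app X) ≫ eqToHom (by rw [mul_one]; rfl)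

variable {k : Type*} [Field k] {G : Type*} [Group G]
variable {V : Type*} [Category V] [Preadditive V] [CategoryTheory.Linear k V]

/-- The categorical character structure map `β_{g,h} : X(g) → X(hgh⁻¹)`, sending a
natural transformation `η : 𝟭 V ⟶ ρ g` to the composite described in
Definition 3.? (string diagram `img36`). -/
def charBeta (ρ : G → V ⥤ V) (ψ : ∀ g h : G, ρ h ⋙ ρ g ≅ ρ (g * h))
    (ψ₁ : ρ 1 ≅ 𝟭 V) (g h : G) (η : 𝟭 V ⟶ ρ g) : 𝟭 V ⟶ ρ (h * g * h⁻¹) :=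
  ψ₁.inv ≫
  eqToHom (show ρ 1 = ρ (h * h⁻¹) by rw [mul_inv_cancel]) ≫
  (ψ h h⁻¹).inv ≫
  Functor.whiskerLeft (ρ h⁻¹) (Functor.whiskerRight η (ρ h)) ≫
  Functor.whiskerLeft (ρ h⁻¹) (ψ h g).hom ≫
  eqToHom (show ρ h⁻¹ ⋙ ρ (h * g) = ρ h⁻¹ ⋙ ρ (h * g * h⁻¹ * h) by
    rw [inv_mul_cancel_right]) ≫
  Functor.whiskerLeft (ρ h⁻¹) (ψ (h * g * h⁻¹) h).inv ≫
  Functor.whiskerRight (ψ h h⁻¹).hom (ρ (h * g * h⁻¹)) ≫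
  eqToHom (show ρ (h * h⁻¹) ⋙ ρ (h * g * h⁻¹) = ρ 1 ⋙ ρ (h * g * h⁻¹) by
    rw [mul_inv_cancel]) ≫
  Functor.whiskerRight ψ₁.hom (ρ (h * g * h⁻¹))

/-- The categorical character structure map `β_{g,h} : X(g) → X(hgh⁻¹)` of a
projective 2-representation is bijective, i.e. an isomorphism of `k`-vector
spaces. -/
theorem ProjTwoRep.charBeta_bijective {k : Type*} [Field k] {G : Type*} [Group G]
    {V : Type*} [Category V] [Preadditive V] [CategoryTheory.Linear k V]
    (P : ProjTwoRep k G V) (g h : G) :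
    Function.Bijective (charBeta P.ρ P.ψ P.ψ₁ g h :
      (𝟭 V ⟶ P.ρ g) → (𝟭 V ⟶ P.ρ (h * g * h⁻¹))) := by

  classical
  haveI := P.equiv h
  haveI := P.equiv h⁻¹
  -- The whiskering functor
  let F : (V ⥤ V) ⥤ (V ⥤ V) :=
    (Functor.whiskeringRight V V V).obj (P.ρ h) ⋙ (Functor.whiskeringLeft V V V).obj (P.ρ h⁻¹)
  haveI : F.IsEquivalence := by
    dsimp only [F]; infer_instance
  let c : (𝟭 V : V ⥤ V) ⟶ F.obj (𝟭 V) :=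
    P.ψ₁.inv ≫ eqToHom (show P.ρ 1 = P.ρ (h * h⁻¹) by rw [mul_inv_cancel]) ≫
      (P.ψ h h⁻¹).inv
  let d : F.obj (P.ρ g) ⟶ P.ρ (h * g * h⁻¹) :=
    Functor.whiskerLeft (P.ρ h⁻¹) (P.ψ h g).hom ≫
    eqToHom (show P.ρ h⁻¹ ⋙ P.ρ (h * g) = P.ρ h⁻¹ ⋙ P.ρ (h * g * h⁻¹ * h) by
      rw [inv_mul_cancel_right]) ≫
    Functor.whiskerLeft (P.ρ h⁻¹) (P.ψ (h * g * h⁻¹) h).inv ≫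
    Functor.whiskerRight (P.ψ h h⁻¹).hom (P.ρ (h * g * h⁻¹)) ≫
    eqToHom (show P.ρ (h * h⁻¹) ⋙ P.ρ (h * g * h⁻¹) = P.ρ 1 ⋙ P.ρ (h * g * h⁻¹) by
      rw [mul_inv_cancel]) ≫
    Functor.whiskerRight P.ψ₁.hom (P.ρ (h * g * h⁻¹))
  have hfun : (charBeta P.ρ P.ψ P.ψ₁ g h :
      (𝟭 V ⟶ P.ρ g) → (𝟭 V ⟶ P.ρ (h * g * h⁻¹))) =
      fun η => c ≫ F.map η ≫ d := by
    funext η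
    simp only [charBeta, c, d, F, Category.assoc]
    rfl
  rw [hfun]
  haveI : IsIso c := by
    dsimp only [c]; infer_instance
  haveI : IsIso d := by
    dsimp only [d]; infer_instance
  constructor
  · intro a b hab
    dsimp only at hab
    have := (cancel_epi c).mp hab
    exact F.map_injective ((cancel_mono d).mp this)
  · intro y
    obtain ⟨x, hx⟩ := F.map_surjective (inv c ≫ y ≫ inv d)
    exact ⟨x, by simp [hx]⟩
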